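/- Let n ≥ 2 and let X ⊆ ℝⁿ be a closed set of circumradius less than 1, i.e. X ⊆ {y : ‖y − p‖ ≤ r} for some p ∈ ℝⁿ and r < 1. Let q ∈ ℝⁿ be such that X ⊆ {y : ‖y − q‖ ≤ 1}. Then: (i) X ∩ S, where S = {y : ‖y − q‖ = 1}, is contained in an open hemisphere of S, i.e. there is a unit vector v with ⟨v, x − q⟩ > 0 for all x ∈ X ∩ S; (ii) conv_s(X) ∩ S equals the spherical convex hull of X ∩ S in S, which can be expressed radially: conv_s(X) ∩ S = {x ∈ S : there exists t with 0 < t ≤ 1 such that q + t(x − q) lies in the (linear) convex hull of X ∩ S}. -/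

import Mathlib

noncomputable section

/-- `B[X]`: the intersection of all closed unit balls centered at points of `X`
(`Set.univ` when `X = ∅`). -/
def ballInter {n : ℕ} (X : Set (EuclideanSpace ℝ (Fin n))) :
    Set (EuclideanSpace ℝ (Fin n)) :=
  ⋂ x ∈ X, Metric.closedBall x 1

/-- The closed spindle `[a,b]_s`: `B[B[{a,b}]]` if `dist a b ≤ 2`, all of the space
otherwise. -/
def spindle {n : ℕ} (a b : EuclideanSpace ℝ (Fin n)) :
    Set (EuclideanSpace ℝ (Fin n)) :=
  if dist a b ≤ 2 then ballInter (ballInter {a, b}) else Set.univ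

/-- A set is spindle convex if it contains the closed spindle of any two of its points. -/
def SpindleConvex {n : ℕ} (C : Set (EuclideanSpace ℝ (Fin n))) : Prop :=
  ∀ a ∈ C, ∀ b ∈ C, spindle a b ⊆ C

/-- The spindle convex hull: the intersection of all spindle convex sets containing `X`. -/
def spindleHull {n : ℕ} (X : Set (EuclideanSpace ℝ (Fin n))) :
    Set (EuclideanSpace ℝ (Fin n)) :=
  ⋂₀ {C : Set (EuclideanSpace ℝ (Fin n)) | X ⊆ C ∧ SpindleConvex C}

/-- Arc-distance `ρ(a,b) = 2 · arcsin(‖a - b‖ / 2)`. -/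
def arcDist {n : ℕ} (a b : EuclideanSpace ℝ (Fin n)) : ℝ :=
  2 * Real.arcsin (dist a b / 2)

open Metric RealInnerProductSpace

section Helpers

set_option maxHeartbeats 1000000

variable {n : ℕ}

lemma mem_ballInter_pair {a b c : EuclideanSpace ℝ (Fin n)} :
    c ∈ ballInter {a, b} ↔ dist c a ≤ 1 ∧ dist c b ≤ 1 := by
  simp [ballInter]

lemma spindle_subset_closedBall {a b c : EuclideanSpace ℝ (Fin n)} (hab : dist a b ≤ 2)
    (hca : dist c a ≤ 1) (hcb : dist c b ≤ 1) : spindle a b ⊆ closedBall c 1 := by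
  rw [spindle, if_pos hab]
  intro y hy
  exact Set.mem_iInter₂.1 hy c (mem_ballInter_pair.2 ⟨hca, hcb⟩)

lemma radial_mem_spindle {q a b : EuclideanSpace ℝ (Fin n)}
    (ha : dist a q = 1) (hb : dist b q = 1)
    {s t : ℝ} (hs : 0 ≤ s) (ht : 0 ≤ t)
    (hz : s • (a - q) + t • (b - q) ≠ 0) :
    q + ‖s • (a - q) + t • (b - q)‖⁻¹ • (s • (a - q) + t • (b - q)) ∈ spindle a b := by
  set z := s • (a - q) + t • (b - q) with hzdef
  have hab : dist a b ≤ 2 := by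
    calc dist a b ≤ dist a q + dist q b := dist_triangle _ _ _
    _ ≤ 2 := by rw [dist_comm q b]; rw [ha, hb]; norm_num
  rw [spindle, if_pos hab]
  refine Set.mem_iInter₂.2 fun c hc => ?_
  obtain ⟨hca, hcb⟩ := mem_ballInter_pair.1 hc
  have hu : ‖a - q‖ = 1 := by rw [← dist_eq_norm]; exact ha
  have hv : ‖b - q‖ = 1 := by rw [← dist_eq_norm]; exact hb
  set e := c - q with hedef
  have h1 : 2 * ⟪e, a - q⟫ ≥ ‖e‖ ^ 2 := by
    have : ‖e - (a - q)‖ ≤ 1 := by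
      rw [hedef, show c - q - (a - q) = c - a by abel]
      rw [← dist_eq_norm]; exact hca
    have hsq : ‖e - (a - q)‖ ^ 2 ≤ 1 := by nlinarith [norm_nonneg (e - (a - q))]
    rw [norm_sub_sq_real] at hsq
    nlinarith [hu]
  have h2 : 2 * ⟪e, b - q⟫ ≥ ‖e‖ ^ 2 := by
    have : ‖e - (b - q)‖ ≤ 1 := by
      rw [hedef, show c - q - (b - q) = c - b by abel]
      rw [← dist_eq_norm]; exact hcb
    have hsq : ‖e - (b - q)‖ ^ 2 ≤ 1 := by nlinarith [norm_nonneg (e - (b - q))]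
    rw [norm_sub_sq_real] at hsq
    nlinarith [hv]
  have hzpos : 0 < ‖z‖ := norm_pos_iff.2 hz
  have hzle : ‖z‖ ≤ s + t := by
    calc ‖z‖ ≤ ‖s • (a - q)‖ + ‖t • (b - q)‖ := norm_add_le _ _
    _ = s + t := by rw [norm_smul, norm_smul, hu, hv]; simp [abs_of_nonneg hs, abs_of_nonneg ht]
  have hze : ⟪z, e⟫ ≥ ‖z‖ * (‖e‖ ^ 2 / 2) := by
    have : ⟪z, e⟫ = s * ⟪a - q, e⟫ + t * ⟪b - q, e⟫ := by
      rw [hzdef, inner_add_left, real_inner_smul_left, real_inner_smul_left]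
    rw [this]
    rw [real_inner_comm e (a-q), real_inner_comm e (b-q)]
    nlinarith [sq_nonneg ‖e‖]
  rw [mem_closedBall, dist_eq_norm]
  have hkey : ‖q + ‖z‖⁻¹ • z - c‖ ^ 2 ≤ 1 := by
    have heq : q + ‖z‖⁻¹ • z - c = ‖z‖⁻¹ • z - e := by rw [hedef]; abel
    rw [heq, norm_sub_sq_real]
    have hwn : ‖‖z‖⁻¹ • z‖ = 1 := by
      rw [norm_smul, norm_inv, norm_norm]
      field_simp
    have hwi : ⟪‖z‖⁻¹ • z, e⟫ = ‖z‖⁻¹ * ⟪z, e⟫ := real_inner_smul_left _ _ _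
    rw [hwn, hwi]
    have : ‖z‖⁻¹ * ⟪z, e⟫ ≥ ‖e‖ ^ 2 / 2 := by
      rw [ge_iff_le, le_inv_mul_iff₀ hzpos]
      linarith [hze]
    nlinarith
  nlinarith [norm_nonneg (q + ‖z‖⁻¹ • z - c)]

lemma exists_good_delta {q a d : EuclideanSpace ℝ (Fin n)} (hd : d ≠ 0) (ha : dist a q ≤ 1)
    (hda : dist a q = 1 → 0 < ⟪d, a - q⟫) :
    ∃ δ : ℝ, 0 < δ ∧ ∀ ε : ℝ, 0 < ε → ε ≤ δ → dist (q + ε • d) a ≤ 1 := by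
  have hdn : 0 < ‖d‖ := norm_pos_iff.2 hd
  rcases eq_or_lt_of_le ha with heq | hlt
  · have hpos := hda heq
    refine ⟨2 * ⟪d, a - q⟫ / ‖d‖ ^ 2, by positivity, fun ε hε hεδ => ?_⟩
    rw [le_div_iff₀ (by positivity : (0:ℝ) < ‖d‖ ^ 2)] at hεδ
    rw [dist_eq_norm]
    have h1 : ‖q + ε • d - a‖ ^ 2 ≤ 1 := by
      have heq2 : q + ε • d - a = ε • d - (a - q) := by abel
      rw [heq2, norm_sub_sq_real, norm_smul, real_inner_smul_left, Real.norm_eq_abs,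
        abs_of_pos hε]
      have hna : ‖a - q‖ = 1 := by rw [← dist_eq_norm]; exact heq
      rw [hna]
      nlinarith
    nlinarith [norm_nonneg (q + ε • d - a)]
  · refine ⟨(1 - dist a q) / ‖d‖, div_pos (by linarith) hdn, fun ε hε hεδ => ?_⟩
    rw [le_div_iff₀ hdn] at hεδ
    calc dist (q + ε • d) a ≤ dist (q + ε • d) q + dist q a := dist_triangle _ _ _
    _ ≤ 1 := by
        have h1 : dist (q + ε • d) q = ε * ‖d‖ := by
          rw [dist_eq_norm, add_sub_cancel_left, norm_smul, Real.norm_eq_abs, abs_of_pos hε]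
        rw [h1, dist_comm q a]
        linarith

lemma not_mem_spindle_of_sep {q a b x d : EuclideanSpace ℝ (Fin n)}
    (ha : dist a q ≤ 1) (hb : dist b q ≤ 1) (hx : dist x q = 1)
    (hda : dist a q = 1 → 0 < ⟪d, a - q⟫) (hdb : dist b q = 1 → 0 < ⟪d, b - q⟫)
    (hdx : ⟪d, x - q⟫ < 0) : x ∉ spindle a b := by
  intro hmem
  have hd : d ≠ 0 := by
    rintro rfl
    rw [inner_zero_left] at hdx
    exact lt_irrefl _ hdx
  obtain ⟨δa, hδa, Ha⟩ := exists_good_delta hd ha hda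
  obtain ⟨δb, hδb, Hb⟩ := exists_good_delta hd hb hdb
  set ε := min δa δb with hεdef
  have hε : 0 < ε := lt_min hδa hδb
  have hab : dist a b ≤ 2 := by
    calc dist a b ≤ dist a q + dist q b := dist_triangle _ _ _
    _ ≤ 2 := by rw [dist_comm q b]; linarith
  have hxball : dist x (q + ε • d) ≤ 1 := by
    have h1 := spindle_subset_closedBall hab (Ha ε hε (min_le_left _ _))
      (Hb ε hε (min_le_right _ _)) hmem
    rwa [mem_closedBall] at h1
  have hgt : 1 < dist x (q + ε • d) ^ 2 := by
    rw [dist_eq_norm]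
    have heq2 : x - (q + ε • d) = (x - q) - ε • d := by abel
    rw [heq2, norm_sub_sq_real, norm_smul, Real.norm_eq_abs, abs_of_pos hε]
    have hnx : ‖x - q‖ = 1 := by rw [← dist_eq_norm]; exact hx
    rw [hnx, real_inner_smul_right]
    have hcomm : ⟪d, x - q⟫ = ⟪x - q, d⟫ := real_inner_comm (x - q) d
    nlinarith [norm_pos_iff.2 hd, mul_pos hε (norm_pos_iff.2 hd)]
  nlinarith [dist_nonneg (x := x) (y := q + ε • d)]

lemma norm_inv_smul_pos {c : ℝ} (hc : 0 < c) (w : EuclideanSpace ℝ (Fin n)) :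
    ‖c • w‖⁻¹ • (c • w) = ‖w‖⁻¹ • w := by
  rcases eq_or_ne w 0 with rfl | hw
  · simp
  · have hnw : 0 < ‖w‖ := norm_pos_iff.2 hw
    rw [norm_smul, Real.norm_eq_abs, abs_of_pos hc, smul_smul]
    congr 1
    field_simp
lemma farkas_two {u v w d₀ : EuclideanSpace ℝ (Fin n)} (hu : ‖u‖ = 1) (hv : ‖v‖ = 1)
    (hd₀u : 0 < ⟪d₀, u⟫) (hd₀v : 0 < ⟪d₀, v⟫)
    (H : ∀ d : EuclideanSpace ℝ (Fin n), 0 < ⟪d, u⟫ → 0 < ⟪d, v⟫ → 0 ≤ ⟪d, w⟫) :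
    ∃ s t : ℝ, 0 ≤ s ∧ 0 ≤ t ∧ w = s • u + t • v := by
  have huu : ⟪u, u⟫ = 1 := by
    rw [real_inner_self_eq_norm_sq, hu]; norm_num
  have hvv : ⟪v, v⟫ = 1 := by
    rw [real_inner_self_eq_norm_sq, hv]; norm_num
  obtain ⟨g, hg⟩ : ∃ g : ℝ, ⟪u, v⟫ = g := ⟨_, rfl⟩
  have hvu : ⟪v, u⟫ = g := by rw [real_inner_comm]; exact hg
  obtain ⟨A, hA⟩ : ∃ A : ℝ, ⟪u, w⟫ = A := ⟨_, rfl⟩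
  have hwu : ⟪w, u⟫ = A := by rw [real_inner_comm]; exact hA
  obtain ⟨B, hB⟩ : ∃ B : ℝ, ⟪v, w⟫ = B := ⟨_, rfl⟩
  have hwv : ⟪w, v⟫ = B := by rw [real_inner_comm]; exact hB
  by_cases huv : u = v
  · -- degenerate case u = v
    subst huv
    have hw : w = A • u := by
      rw [← sub_eq_zero]
      by_contra hne
      have hnorm : 0 < ‖w - A • u‖ ^ 2 := pow_pos (norm_pos_iff.2 hne) 2
      have hcross : ⟪w - A • u, u⟫ = 0 := by
        simp only [inner_sub_left, real_inner_smul_left, huu, hwu]; ring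
      have hself : ⟪w - A • u, w⟫ = ‖w - A • u‖ ^ 2 := by
        have hid : w = (w - A • u) + A • u := by abel
        calc ⟪w - A • u, w⟫ = ⟪w - A • u, (w - A • u) + A • u⟫ := by rw [← hid]
        _ = ‖w - A • u‖ ^ 2 := by
            rw [inner_add_right, real_inner_smul_right, real_inner_comm]
            rw [hcross, real_inner_self_eq_norm_sq]; ring
      set d := (‖w - A • u‖ ^ 2) • u - (2 * (|A| + 1)) • (w - A • u) with hddef
      have hd1 : 0 < ⟪d, u⟫ := by
        rw [hddef, inner_sub_left, real_inner_smul_left, real_inner_smul_left, huu, hcross]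
        nlinarith
      have hH := H d hd1 hd1
      rw [hddef, inner_sub_left, real_inner_smul_left, real_inner_smul_left,
        hA, hself] at hH
      nlinarith [le_abs_self A, abs_nonneg A]
    have hApos : 0 ≤ A := by
      have h0 := H d₀ hd₀u hd₀u
      rw [hw, real_inner_smul_right] at h0
      nlinarith
    exact ⟨A, 0, hApos, le_refl 0, by rw [hw]; simp⟩
  · -- independent case
    have hg1 : g < 1 := by
      have hne : u - v ≠ 0 := sub_ne_zero.2 huv
      have h := norm_sub_sq_real u v
      rw [hu, hv, hg] at h
      have h2 : 0 < ‖u - v‖ ^ 2 := pow_pos (norm_pos_iff.2 hne) 2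
      nlinarith
    have hg2 : -1 < g := by
      have hne : u + v ≠ 0 := by
        intro h0
        have hveq : v = -u := by
          rw [add_eq_zero_iff_eq_neg] at h0
          rw [h0]; abel
        rw [hveq, inner_neg_right] at hd₀v
        linarith
      have h := norm_add_sq_real u v
      rw [hu, hv, hg] at h
      have h2 : 0 < ‖u + v‖ ^ 2 := pow_pos (norm_pos_iff.2 hne) 2
      nlinarith
    have hD : 0 < 1 - g ^ 2 := by nlinarith
    obtain ⟨s, hsdef⟩ : ∃ s : ℝ, (A - g * B) / (1 - g ^ 2) = s := ⟨_, rfl⟩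
    obtain ⟨t, htdef⟩ : ∃ t : ℝ, (B - g * A) / (1 - g ^ 2) = t := ⟨_, rfl⟩
    have hsA : s + t * g = A := by
      rw [← hsdef, ← htdef]; field_simp; ring
    have htB : s * g + t = B := by
      rw [← hsdef, ← htdef]; field_simp; ring
    set w' := w - (s • u + t • v) with hw'def
    have hw'u : ⟪w', u⟫ = 0 := by
      rw [hw'def]
      simp only [inner_sub_left, inner_add_left, real_inner_smul_left, huu, hvu, hwu]
      nlinarith [hsA]
    have hw'v : ⟪w', v⟫ = 0 := by
      rw [hw'def]
      simp only [inner_sub_left, inner_add_left, real_inner_smul_left, hvv, hg, hwv]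
      nlinarith [htB]
    have hw'w : ⟪w', w⟫ = ‖w'‖ ^ 2 := by
      have hid : w = w' + (s • u + t • v) := by rw [hw'def]; abel
      calc ⟪w', w⟫ = ⟪w', w' + (s • u + t • v)⟫ := by rw [← hid]
      _ = ‖w'‖ ^ 2 := by
          rw [inner_add_right, inner_add_right, real_inner_smul_right,
            real_inner_smul_right, hw'u, hw'v, real_inner_self_eq_norm_sq]
          ring
    have hw0 : w = s • u + t • v := by
      rw [← sub_eq_zero, ← hw'def]
      by_contra hne
      have hnorm : 0 < ‖w'‖ ^ 2 := pow_pos (norm_pos_iff.2 hne) 2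
      obtain ⟨c, hc⟩ : ∃ c : ℝ, ⟪u + v, w⟫ = c := ⟨_, rfl⟩
      set d := (‖w'‖ ^ 2) • (u + v) - (2 * (|c| + 1)) • w' with hddef
      have hdu : ⟪d, u⟫ = ‖w'‖ ^ 2 * (1 + g) := by
        rw [hddef, inner_sub_left, real_inner_smul_left, real_inner_smul_left,
          inner_add_left, huu, hvu, hw'u]
        ring
      have hdv : ⟪d, v⟫ = ‖w'‖ ^ 2 * (g + 1) := by
        rw [hddef, inner_sub_left, real_inner_smul_left, real_inner_smul_left,
          inner_add_left, hvv, hg, hw'v]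
        ring
      have hH := H d (by rw [hdu]; nlinarith) (by rw [hdv]; nlinarith)
      rw [hddef, inner_sub_left, real_inner_smul_left, real_inner_smul_left,
        hc, hw'w] at hH
      nlinarith [le_abs_self c, abs_nonneg c]
    have hiw : ∀ d : EuclideanSpace ℝ (Fin n), ⟪d, w⟫ = s * ⟪d, u⟫ + t * ⟪d, v⟫ := by
      intro d
      rw [hw0, inner_add_right, real_inner_smul_right, real_inner_smul_right]
    have hs0 : 0 ≤ s := by
      by_contra hs
      push_neg at hs
      set d := (2 * (|t| + 1)) • (u - g • v) + (-s) • (v - g • u) with hddef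
      have hdu : ⟪d, u⟫ = 2 * (|t| + 1) * (1 - g ^ 2) := by
        rw [hddef]
        simp only [inner_add_left, inner_sub_left, real_inner_smul_left, huu, hvu, hg]
        ring
      have hdv : ⟪d, v⟫ = (-s) * (1 - g ^ 2) := by
        rw [hddef]
        simp only [inner_add_left, inner_sub_left, real_inner_smul_left, hvv, hvu, hg]
        ring
      have hH := H d (by rw [hdu]; nlinarith [abs_nonneg t]) (by rw [hdv]; nlinarith)
      rw [hiw d, hdu, hdv] at hH
      have h2pos : (0:ℝ) < 2 * (|t| + 1) - t := by
        have := le_abs_self t; have := abs_nonneg t; linarith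
      nlinarith [mul_pos (mul_pos (neg_pos.2 hs) hD) h2pos]
    have ht0 : 0 ≤ t := by
      by_contra ht
      push_neg at ht
      set d := (-t) • (u - g • v) + (2 * (|s| + 1)) • (v - g • u) with hddef
      have hdu : ⟪d, u⟫ = (-t) * (1 - g ^ 2) := by
        rw [hddef]
        simp only [inner_add_left, inner_sub_left, real_inner_smul_left, huu, hvu, hg]
        ring
      have hdv : ⟪d, v⟫ = 2 * (|s| + 1) * (1 - g ^ 2) := by
        rw [hddef]
        simp only [inner_add_left, inner_sub_left, real_inner_smul_left, hvv, hvu, hg]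
        ring
      have hH := H d (by rw [hdu]; nlinarith) (by rw [hdv]; nlinarith [abs_nonneg s])
      rw [hiw d, hdu, hdv] at hH
      have h2pos : (0:ℝ) < 2 * (|s| + 1) - s := by
        have := le_abs_self s; have := abs_nonneg s; linarith
      nlinarith [mul_pos (mul_pos (neg_pos.2 ht) hD) h2pos]
    exact ⟨s, t, hs0, ht0, hw0⟩

end Helpers

set_option maxHeartbeats 2000000 in
theorem spindleHull_inter_supporting_sphere (n : ℕ) (hn : 2 ≤ n)
    (X : Set (EuclideanSpace ℝ (Fin n))) (hcl : IsClosed X)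
    (hcr : ∃ (p : EuclideanSpace ℝ (Fin n)) (r : ℝ), r < 1 ∧ X ⊆ Metric.closedBall p r)
    (q : EuclideanSpace ℝ (Fin n)) (hq : X ⊆ Metric.closedBall q 1) :
    (∃ v : EuclideanSpace ℝ (Fin n), ‖v‖ = 1 ∧
      ∀ x ∈ X ∩ Metric.sphere q 1, 0 < (inner ℝ v (x - q) : ℝ)) ∧
    spindleHull X ∩ Metric.sphere q 1 =
      {x : EuclideanSpace ℝ (Fin n) | x ∈ Metric.sphere q 1 ∧
        ∃ t : ℝ, 0 < t ∧ t ≤ 1 ∧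
          q + t • (x - q) ∈ convexHull ℝ (X ∩ Metric.sphere q 1)} := by
  obtain ⟨p, r, hr, hXpr⟩ := hcr
  have hn0 : 0 < n := by omega
  -- part (i): the hemisphere direction
  obtain ⟨v, hv1, hv⟩ : ∃ v : EuclideanSpace ℝ (Fin n), ‖v‖ = 1 ∧
      ∀ x ∈ X ∩ Metric.sphere q 1, 0 < ⟪v, x - q⟫ := by
    by_cases hXS : (X ∩ Metric.sphere q 1).Nonempty
    · obtain ⟨x₀, hx₀X, hx₀S⟩ := hXS
      have hx₀p : dist x₀ p ≤ r := hXpr hx₀X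
      have hr0 : 0 ≤ r := le_trans dist_nonneg hx₀p
      have hpq : p ≠ q := by
        intro h; subst h
        have h1 : dist x₀ p = 1 := mem_sphere.1 hx₀S
        linarith
      have hpqn : 0 < ‖p - q‖ := norm_pos_iff.2 (sub_ne_zero.2 hpq)
      refine ⟨‖p - q‖⁻¹ • (p - q), ?_, ?_⟩
      · rw [norm_smul, norm_inv, norm_norm]; field_simp
      · rintro x ⟨hxX, hxS⟩
        have hx1 : ‖x - q‖ = 1 := by rw [← dist_eq_norm]; exact mem_sphere.1 hxS
        have hxp : ‖x - p‖ ≤ r := by rw [← dist_eq_norm]; exact hXpr hxX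
        rw [real_inner_smul_left]
        have hinner : 0 < ⟪p - q, x - q⟫ := by
          have h := norm_sub_sq_real (p - q) (x - q)
          rw [show p - q - (x - q) = p - x by abel, hx1] at h
          have h2 : ‖p - x‖ ≤ r := by rw [norm_sub_rev]; exact hxp
          nlinarith [norm_nonneg (p - x)]
        positivity
    · refine ⟨EuclideanSpace.single ⟨0, hn0⟩ 1, ?_, ?_⟩
      · simp
      · intro x hx
        exact absurd ⟨x, hx⟩ hXS
  refine ⟨⟨v, hv1, hv⟩, ?_⟩
  -- part (ii)
  set A := convexHull ℝ (X ∩ Metric.sphere q 1) with hAdef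
  set R := {x : EuclideanSpace ℝ (Fin n) | x ∈ Metric.sphere q 1 ∧
      ∃ t : ℝ, 0 < t ∧ t ≤ 1 ∧ q + t • (x - q) ∈ A} with hRdef
  -- the convex hull lies in the open half space
  have hAhalf : ∀ y ∈ A, 0 < ⟪v, y - q⟫ := by
    have hlin : IsLinearMap ℝ (fun y : EuclideanSpace ℝ (Fin n) => ⟪v, y⟫) :=
      ⟨fun a b => inner_add_right v a b, fun c a => by
        rw [smul_eq_mul]; exact real_inner_smul_right v a c⟩
    have hconv : Convex ℝ {y : EuclideanSpace ℝ (Fin n) | ⟪v, q⟫ < ⟪v, y⟫} :=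
      convex_halfSpace_gt hlin _
    intro y hy
    have hsub : X ∩ Metric.sphere q 1 ⊆ {y : EuclideanSpace ℝ (Fin n) | ⟪v, q⟫ < ⟪v, y⟫} := by
      intro x hx
      have h := hv x hx
      rw [inner_sub_right] at h
      simpa using sub_pos.1 h
    have h2 := convexHull_min hsub hconv hy
    rw [inner_sub_right]
    exact sub_pos.2 h2
  have hRv : ∀ x ∈ R, 0 < ⟪v, x - q⟫ := by
    rintro x ⟨hxS, t, ht0, ht1, hty⟩
    have h := hAhalf _ hty
    rw [add_sub_cancel_left, real_inner_smul_right] at h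
    nlinarith
  -- the candidate spindle convex set
  have hCsp : SpindleConvex (Metric.ball q 1 ∪ R) := by
    rintro a ha b hb x hx
    have hmem1 : ∀ y, y ∈ Metric.ball q 1 ∪ R → dist y q ≤ 1 := by
      rintro y (hy | hy)
      · exact le_of_lt (mem_ball.1 hy)
      · exact le_of_eq (mem_sphere.1 hy.1)
    have haq := hmem1 a ha
    have hbq := hmem1 b hb
    have hab : dist a b ≤ 2 := by
      calc dist a b ≤ dist a q + dist q b := dist_triangle _ _ _
      _ ≤ 2 := by rw [dist_comm q b]; linarith
    have hxq : dist x q ≤ 1 := by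
      have h := spindle_subset_closedBall hab (by rw [dist_comm]; exact haq)
        (by rw [dist_comm]; exact hbq) hx
      rwa [mem_closedBall] at h
    rcases lt_or_eq_of_le hxq with hlt | hxS
    · exact Or.inl (mem_ball.2 hlt)
    right
    have hnx : ‖x - q‖ = 1 := by rw [← dist_eq_norm]; exact hxS
    have Hsep : ∀ d : EuclideanSpace ℝ (Fin n), (dist a q = 1 → 0 < ⟪d, a - q⟫) →
        (dist b q = 1 → 0 < ⟪d, b - q⟫) → 0 ≤ ⟪d, x - q⟫ := by
      intro d h1 h2
      by_contra h
      push_neg at h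
      exact not_mem_spindle_of_sep haq hbq hxS h1 h2 h hx
    -- small helpers for the ball cases
    have hballvac : ∀ y, y ∈ Metric.ball q 1 → (dist y q = 1 → ∀ {P : Prop}, P) := by
      intro y hy heq
      exact absurd heq (ne_of_lt (mem_ball.1 hy))
    -- helper: the inner product of two distinct unit sphere points is < 1
    have hinlt : ∀ y : EuclideanSpace ℝ (Fin n), dist y q = 1 → y ≠ x →
        ⟪y - q, x - q⟫ < 1 := by
      intro y hyq hyx
      have hny : ‖y - q‖ = 1 := by rw [← dist_eq_norm]; exact hyq
      have h := norm_sub_sq_real (y - q) (x - q)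
      rw [hny, hnx] at h
      have hne : y - q - (x - q) ≠ 0 := by
        rw [show y - q - (x - q) = y - x by abel]
        exact sub_ne_zero.2 hyx
      have h2 : 0 < ‖y - q - (x - q)‖ ^ 2 := pow_pos (norm_pos_iff.2 hne) 2
      nlinarith
    -- the "one point in R, other in ball, x ≠ that point" contradiction
    have hcontra : ∀ y : EuclideanSpace ℝ (Fin n), dist y q = 1 → y ≠ x →
        ¬ (0 ≤ ⟪y - x, x - q⟫) := by
      intro y hyq hyx hge
      have h1 := hinlt y hyq hyx
      have h2 : ⟪y - x, x - q⟫ = ⟪y - q, x - q⟫ - 1 := by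
        rw [show y - x = (y - q) - (x - q) by abel, inner_sub_left,
          real_inner_self_eq_norm_sq, hnx]
        norm_num
      rw [h2] at hge
      linarith
    have hdpos : ∀ y : EuclideanSpace ℝ (Fin n), dist y q = 1 → y ≠ x →
        0 < ⟪y - x, y - q⟫ := by
      intro y hyq hyx
      have hny : ‖y - q‖ = 1 := by rw [← dist_eq_norm]; exact hyq
      have h1 := hinlt y hyq hyx
      have h2 : ⟪y - x, y - q⟫ = 1 - ⟪x - q, y - q⟫ := by
        rw [show y - x = (y - q) - (x - q) by abel, inner_sub_left,
          real_inner_self_eq_norm_sq, hny]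
        norm_num
      rw [h2, real_inner_comm]
      linarith
    rcases ha with ha | ha <;> rcases hb with hb | hb
    · -- both in the open ball: impossible
      exfalso
      have h := Hsep (q - x) (fun heq => hballvac a ha heq) (fun heq => hballvac b hb heq)
      have h2 : ⟪q - x, x - q⟫ = -1 := by
        rw [show q - x = -(x - q) by abel, inner_neg_left, real_inner_self_eq_norm_sq, hnx]
        norm_num
      rw [h2] at h
      linarith
    · -- a in ball, b in R : x = b
      by_cases hxb : x = b
      · rwa [hxb]
      exfalso
      have hbS : dist b q = 1 := mem_sphere.1 hb.1
      have h := Hsep (b - x) (fun heq => hballvac a ha heq)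
        (fun _ => hdpos b hbS (fun hh => hxb hh.symm))
      exact hcontra b hbS (fun hh => hxb hh.symm) h
    · -- a in R, b in ball : x = a
      by_cases hxa : x = a
      · rwa [hxa]
      exfalso
      have haS : dist a q = 1 := mem_sphere.1 ha.1
      have h := Hsep (a - x) (fun _ => hdpos a haS (fun hh => hxa hh.symm))
        (fun heq => hballvac b hb heq)
      exact hcontra a haS (fun hh => hxa hh.symm) h
    · -- both in R
      have haS : dist a q = 1 := mem_sphere.1 ha.1
      have hbS : dist b q = 1 := mem_sphere.1 hb.1
      have hna : ‖a - q‖ = 1 := by rw [← dist_eq_norm]; exact haS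
      have hnb : ‖b - q‖ = 1 := by rw [← dist_eq_norm]; exact hbS
      have hva : 0 < ⟪v, a - q⟫ := hRv a ha
      have hvb : 0 < ⟪v, b - q⟫ := hRv b hb
      obtain ⟨s, t, hs, ht, hw⟩ := farkas_two hna hnb hva hvb
        (fun d h1 h2 => Hsep d (fun _ => h1) (fun _ => h2))
      obtain ⟨_, la, hla0, hla1, hpa⟩ := ha
      obtain ⟨_, lb, hlb0, hlb1, hpb⟩ := hb
      have hst : 1 ≤ s + t := by
        have h1 : ‖x - q‖ ≤ s + t := by
          rw [hw]
          calc ‖s • (a - q) + t • (b - q)‖ ≤ ‖s • (a - q)‖ + ‖t • (b - q)‖ := norm_add_le _ _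
          _ = s + t := by
              rw [norm_smul, norm_smul, hna, hnb, Real.norm_eq_abs, Real.norm_eq_abs,
                abs_of_nonneg hs, abs_of_nonneg ht]
              ring
        rw [hnx] at h1
        exact h1
      set α := s / la with hαdef
      set β := t / lb with hβdef
      have hα0 : 0 ≤ α := div_nonneg hs hla0.le
      have hβ0 : 0 ≤ β := div_nonneg ht hlb0.le
      have hsα : s ≤ α := by
        rw [hαdef, le_div_iff₀ hla0]
        nlinarith
      have htβ : t ≤ β := by
        rw [hβdef, le_div_iff₀ hlb0]
        nlinarith
      have hαβ : 1 ≤ α + β := by linarith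
      have hαβ0 : 0 < α + β := by linarith
      set μ := (α + β)⁻¹ with hμdef
      have hμ0 : 0 < μ := inv_pos.2 hαβ0
      have hμ1 : μ ≤ 1 := by
        rw [hμdef]
        exact inv_le_one_of_one_le₀ hαβ
      have hala : α * la = s := div_mul_cancel₀ s hla0.ne'
      have hblb : β * lb = t := div_mul_cancel₀ t hlb0.ne'
      have hsum : μ * α + μ * β = 1 := by
        rw [hμdef, ← mul_add]
        exact inv_mul_cancel₀ hαβ0.ne'
      refine ⟨mem_sphere.2 hxS, μ, hμ0, hμ1, ?_⟩
      have hAconv : Convex ℝ A := convex_convexHull ℝ _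
      have hmem := hAconv hpa hpb (by positivity) (by positivity) hsum
      have hpt : (μ * α) • (q + la • (a - q)) + (μ * β) • (q + lb • (b - q)) =
          q + μ • (s • (a - q) + t • (b - q)) := by
        rw [← hala, ← hblb]
        have h1 : (μ * α) • q + (μ * β) • q = q := by
          rw [← add_smul, hsum, one_smul]
        calc (μ * α) • (q + la • (a - q)) + (μ * β) • (q + lb • (b - q))
            = ((μ * α) • q + (μ * β) • q) +
              ((μ * (α * la)) • (a - q) + (μ * (β * lb)) • (b - q)) := by module
        _ = q + μ • ((α * la) • (a - q) + (β * lb) • (b - q)) := by rw [h1]; module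
      rw [hw, ← hpt]
      exact hmem
  have hXC : X ⊆ Metric.ball q 1 ∪ R := by
    intro x hx
    rcases lt_or_eq_of_le (mem_closedBall.1 (hq hx)) with h | h
    · exact Or.inl (mem_ball.2 h)
    · refine Or.inr ⟨mem_sphere.2 h, 1, one_pos, le_refl 1, ?_⟩
      rw [one_smul, show q + (x - q) = x by abel]
      exact subset_convexHull ℝ _ ⟨hx, mem_sphere.2 h⟩
  apply Set.eq_of_subset_of_subset
  · -- hull ∩ sphere ⊆ R
    rintro x ⟨hxH, hxS⟩
    have hxC : x ∈ Metric.ball q 1 ∪ R := Set.mem_sInter.1 hxH _ ⟨hXC, hCsp⟩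
    rcases hxC with hxC | hxC
    · exact absurd (mem_sphere.1 hxS) (ne_of_lt (mem_ball.1 hxC))
    · exact hxC
  · -- R ⊆ hull ∩ sphere
    rintro x ⟨hxS, t, ht0, ht1, hty⟩
    refine ⟨?_, hxS⟩
    rw [spindleHull]
    refine Set.mem_sInter.2 ?_
    rintro C ⟨hXC', hCsp'⟩
    have hnx : ‖x - q‖ = 1 := by rw [← dist_eq_norm]; exact mem_sphere.1 hxS
    set P := {y : EuclideanSpace ℝ (Fin n) | y = q ∨
        q + ‖y - q‖⁻¹ • (y - q) ∈ C} with hPdef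
    have hPX : X ∩ Metric.sphere q 1 ⊆ P := by
      rintro y ⟨hyX, hyS⟩
      right
      have hny : ‖y - q‖ = 1 := by rw [← dist_eq_norm]; exact mem_sphere.1 hyS
      rw [hny, inv_one, one_smul, show q + (y - q) = y by abel]
      exact hXC' hyX
    have hPconv : Convex ℝ P := by
      intro y₁ hy₁ y₂ hy₂ θ₁ θ₂ hθ₁ hθ₂ hθ
      by_cases hyq : θ₁ • y₁ + θ₂ • y₂ = q
      · exact Or.inl hyq
      right
      have hznz : θ₁ • y₁ + θ₂ • y₂ - q ≠ 0 := sub_ne_zero.2 hyq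
      have hzdec : θ₁ • y₁ + θ₂ • y₂ - q = θ₁ • (y₁ - q) + θ₂ • (y₂ - q) := by
        have hq1 : q = (θ₁ + θ₂) • q := by rw [hθ, one_smul]
        calc θ₁ • y₁ + θ₂ • y₂ - q = θ₁ • y₁ + θ₂ • y₂ - (θ₁ + θ₂) • q := by rw [← hq1]
        _ = θ₁ • (y₁ - q) + θ₂ • (y₂ - q) := by module
      by_cases h1q : y₁ = q
      · -- reduces to y₂
        subst h1q
        have hz2 : θ₁ • y₁ + θ₂ • y₂ - y₁ = θ₂ • (y₂ - y₁) := by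
          rw [hzdec]; simp
        have hθ2 : 0 < θ₂ := by
          rcases lt_or_eq_of_le hθ₂ with h | h
          · exact h
          · exfalso; apply hznz; rw [hz2, ← h, zero_smul]
        rw [hz2, norm_inv_smul_pos hθ2]
        have h2q : y₂ ≠ y₁ := by
          intro h
          apply hznz
          rw [hz2, h, sub_self, smul_zero]
        rcases hy₂ with h | h
        · exact absurd h h2q
        · exact h
      by_cases h2q : y₂ = q
      · subst h2q
        have hz2 : θ₁ • y₁ + θ₂ • y₂ - y₂ = θ₁ • (y₁ - y₂) := by
          rw [hzdec]; simp
        have hθ1 : 0 < θ₁ := by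
          rcases lt_or_eq_of_le hθ₁ with h | h
          · exact h
          · exfalso; apply hznz; rw [hz2, ← h, zero_smul]
        rw [hz2, norm_inv_smul_pos hθ1]
        have h1q : y₁ ≠ y₂ := by
          intro h
          apply hznz
          rw [hz2, h, sub_self, smul_zero]
        rcases hy₁ with h | h
        · exact absurd h h1q
        · exact h
      -- both different from q
      have hy₁C : q + ‖y₁ - q‖⁻¹ • (y₁ - q) ∈ C := by
        rcases hy₁ with h | h
        · exact absurd h h1q
        · exact h
      have hy₂C : q + ‖y₂ - q‖⁻¹ • (y₂ - q) ∈ C := by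
        rcases hy₂ with h | h
        · exact absurd h h2q
        · exact h
      have hn1 : 0 < ‖y₁ - q‖ := norm_pos_iff.2 (sub_ne_zero.2 h1q)
      have hn2 : 0 < ‖y₂ - q‖ := norm_pos_iff.2 (sub_ne_zero.2 h2q)
      set a := q + ‖y₁ - q‖⁻¹ • (y₁ - q) with hadef
      set b := q + ‖y₂ - q‖⁻¹ • (y₂ - q) with hbdef
      have haS : dist a q = 1 := by
        rw [dist_eq_norm, hadef, add_sub_cancel_left, norm_smul, norm_inv, norm_norm]
        field_simp
      have hbS : dist b q = 1 := by
        rw [dist_eq_norm, hbdef, add_sub_cancel_left, norm_smul, norm_inv, norm_norm]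
        field_simp
      have hZeq : (θ₁ * ‖y₁ - q‖) • (a - q) + (θ₂ * ‖y₂ - q‖) • (b - q) =
          θ₁ • y₁ + θ₂ • y₂ - q := by
        rw [hadef, hbdef, add_sub_cancel_left, add_sub_cancel_left, smul_smul, smul_smul,
          hzdec]
        congr 1
        · congr 1
          field_simp
        · congr 1
          field_simp
      have hZnz : (θ₁ * ‖y₁ - q‖) • (a - q) + (θ₂ * ‖y₂ - q‖) • (b - q) ≠ 0 := by
        rw [hZeq]; exact hznz
      have hmem := radial_mem_spindle haS hbS (by positivity) (by positivity) hZnz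
      rw [hZeq] at hmem
      exact hCsp' a hy₁C b hy₂C hmem
    have hP := convexHull_min hPX hPconv hty
    rcases hP with h | h
    · exfalso
      have : t • (x - q) = 0 := by
        have h2 : q + t • (x - q) - q = 0 := by rw [h]; simp
        rwa [add_sub_cancel_left] at h2
      rcases smul_eq_zero.1 this with h2 | h2
      · linarith
      · rw [h2] at hnx; simp at hnx
    · have heq : q + t • (x - q) - q = t • (x - q) := add_sub_cancel_left _ _
      rw [heq, norm_inv_smul_pos ht0, hnx, inv_one, one_smul,
        show q + (x - q) = x by abel] at h
      exact h
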